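/- For every nonzero f ∈ I, the signature S(f) belongs to NS(Syz F); that is, S(f) is not the leading module term of any nonzero syzygy of F. -/

import Mathlib

open MvPolynomial

namespace F5

noncomputable section
open scoped Classical

/-- Monomials (power products) in `n` variables, represented by exponent vectors. -/
abbrev Mon (n : ℕ) : Type := Fin n →₀ ℕ

/-- Module terms `t·eₗ` of the free module `Pᵐ`. -/
abbrev MTerm (n m : ℕ) : Type := (Fin n →₀ ℕ) × Fin m

/-- Action of a monomial on a module term: `u • (t eₗ) = (u t) eₗ`. -/
def mact {n m : ℕ} (u : Mon n) (σ : MTerm n m) : MTerm n m := (u + σ.1, σ.2)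

/-- An admissible order on monomials: a linear order with `1 ≤ t` and
compatibility with multiplication. -/
structure AdmissibleOrder (n : ℕ) where
  ord : LinearOrder (Mon n)
  one_le : ∀ t : Mon n, ord.le 0 t
  mul_lt_mul : ∀ s t u : Mon n, ord.lt s t → ord.lt (u + s) (u + t)

/-- An admissible module order on module terms: a linear well-order compatible
with the monomial action, and such that `σ ≤ u σ`. -/
structure ModuleOrder (n m : ℕ) where
  ord : LinearOrder (MTerm n m)
  wf : WellFounded ord.lt
  mul_lt_mul : ∀ (σ τ : MTerm n m) (u : Mon n), ord.lt σ τ → ord.lt (mact u σ) (mact u τ)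
  le_mul : ∀ (σ : MTerm n m) (u : Mon n), ord.le σ (mact u σ)

variable {k : Type*} [Field k] {n m : ℕ}

/-- The leading monomial of a polynomial with respect to `μ` (junk value `0` for `f = 0`). -/
noncomputable def pLT (μ : AdmissibleOrder n) (f : MvPolynomial (Fin n) k) : Mon n :=
  if h : f.support.Nonempty then @Finset.max' _ μ.ord f.support h else 0

/-- The leading coefficient of a polynomial with respect to `μ`. -/
noncomputable def pLC (μ : AdmissibleOrder n) (f : MvPolynomial (Fin n) k) : k :=
  f.coeff (pLT μ f)

/-- The set (finset) of module terms occurring in an element of `Pᵐ`. -/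
noncomputable def msupport (u : Fin m → MvPolynomial (Fin n) k) : Finset (MTerm n m) :=
  letI := Classical.decEq (MTerm n m)
  Finset.univ.biUnion fun l => (u l).support.image fun t => (t, l)

/-- A junk default module term (needs `m ≠ 0`). -/
def mdefault [NeZero m] : MTerm n m := (0, ⟨0, Nat.pos_of_ne_zero (NeZero.ne m)⟩)

/-- The leading module term of a nonzero element of `Pᵐ` with respect to `μ'`
(junk value for `0`). -/
noncomputable def mLT [NeZero m] (μ' : ModuleOrder n m) (u : Fin m → MvPolynomial (Fin n) k) :
    MTerm n m :=
  if h : (msupport u).Nonempty then @Finset.max' _ μ'.ord _ h else mdefault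

/-- The map `v : Pᵐ → P`, `v(eᵢ) = fᵢ`. -/
noncomputable def vmap (F : Fin m → MvPolynomial (Fin n) k)
    (u : Fin m → MvPolynomial (Fin n) k) : MvPolynomial (Fin n) k :=
  ∑ i, u i * F i

/-- The ideal `I = (f₁, …, fₘ)`. -/
noncomputable def idealI (F : Fin m → MvPolynomial (Fin n) k) : Ideal (MvPolynomial (Fin n) k) :=
  Ideal.span (Set.range F)

/-- `LT(Syz F)`: leading module terms of nonzero syzygies of `F`. -/
def LTSyz [NeZero m] (μ' : ModuleOrder n m) (F : Fin m → MvPolynomial (Fin n) k) :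
    Set (MTerm n m) :=
  {σ | ∃ s : Fin m → MvPolynomial (Fin n) k, s ≠ 0 ∧ vmap F s = 0 ∧ mLT μ' s = σ}

/-- The signature `S(f)`: the `μ'`-minimum of `{LT(u) : v(u) = f}` (junk for `f = 0` or
`f ∉ I`). -/
noncomputable def sig [NeZero m] (μ' : ModuleOrder n m) (F : Fin m → MvPolynomial (Fin n) k)
    (f : MvPolynomial (Fin n) k) : MTerm n m :=
  if hne : {σ : MTerm n m |
      ∃ u : Fin m → MvPolynomial (Fin n) k, u ≠ 0 ∧ vmap F u = f ∧ mLT μ' u = σ}.Nonempty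
  then μ'.wf.min _ hne else mdefault

/-- `f` S-reduces to `g` with `h`, with respect to `σ`. -/
noncomputable def SReduces [NeZero m] (μ : AdmissibleOrder n) (μ' : ModuleOrder n m)
    (F : Fin m → MvPolynomial (Fin n) k)
    (f h g : MvPolynomial (Fin n) k) (σ : MTerm n m) : Prop :=
  ∃ (t : Mon n) (α : k), α ≠ 0 ∧ g = f - (monomial t α) * h ∧
    (g = 0 ∨ μ.ord.lt (pLT μ g) (pLT μ f)) ∧
    μ'.ord.lt (sig μ' F ((monomial t (1 : k)) * h)) σ

/-- `f` is S-irreducible with respect to `σ`. -/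
noncomputable def SIrr [NeZero m] (μ : AdmissibleOrder n) (μ' : ModuleOrder n m)
    (F : Fin m → MvPolynomial (Fin n) k) (f : MvPolynomial (Fin n) k) (σ : MTerm n m) : Prop :=
  f = 0 ∨ ¬ ∃ h : MvPolynomial (Fin n) k, h ∈ idealI F ∧ h ≠ 0 ∧
    ∃ g : MvPolynomial (Fin n) k, SReduces μ μ' F f h g σ

/-- `G` is an S-Gröbner basis (of `I` w.r.t. `μ`, `F`, `μ'`). -/
noncomputable def IsSGB [NeZero m] (μ : AdmissibleOrder n) (μ' : ModuleOrder n m)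
    (F : Fin m → MvPolynomial (Fin n) k) (G : Set (MvPolynomial (Fin n) k)) : Prop :=
  (∀ g ∈ G, g ∈ idealI F ∧ g ≠ 0) ∧
  ∀ f : MvPolynomial (Fin n) k, f ∈ idealI F → f ≠ 0 → SIrr μ μ' F f (sig μ' F f) →
    ∃ g ∈ G, ∃ t : Mon n,
      pLT μ ((monomial t (1 : k)) * g) = pLT μ f ∧
      sig μ' F ((monomial t (1 : k)) * g) = sig μ' F f

/-- `LT(I)`: the set of leading monomials of nonzero elements of `I`. -/
def LTIdeal (μ : AdmissibleOrder n) (F : Fin m → MvPolynomial (Fin n) k) : Set (Mon n) :=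
  {t | ∃ f : MvPolynomial (Fin n) k, f ∈ idealI F ∧ f ≠ 0 ∧ pLT μ f = t}

/-- `φ(t)`: the `μ'`-minimum signature of nonzero elements of `I` with leading monomial `t`. -/
noncomputable def phi [NeZero m] (μ : AdmissibleOrder n) (μ' : ModuleOrder n m)
    (F : Fin m → MvPolynomial (Fin n) k) (t : Mon n) : MTerm n m :=
  if hne : {σ : MTerm n m | ∃ f : MvPolynomial (Fin n) k,
      f ∈ idealI F ∧ f ≠ 0 ∧ pLT μ f = t ∧ sig μ' F f = σ}.Nonempty
  then μ'.wf.min _ hne else mdefault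

/-- `f` is a primitive S-irreducible polynomial. -/
noncomputable def PrimSIrr [NeZero m] (μ : AdmissibleOrder n) (μ' : ModuleOrder n m)
    (F : Fin m → MvPolynomial (Fin n) k) (f : MvPolynomial (Fin n) k) : Prop :=
  f ∈ idealI F ∧ f ≠ 0 ∧ SIrr μ μ' F f (sig μ' F f) ∧
  ¬ ∃ (f' : MvPolynomial (Fin n) k) (t : Mon n),
      f' ∈ idealI F ∧ f' ≠ 0 ∧ t ≠ 0 ∧ SIrr μ μ' F f' (sig μ' F f') ∧
      pLT μ ((monomial t (1 : k)) * f') = pLT μ f ∧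
      sig μ' F ((monomial t (1 : k)) * f') = sig μ' F f

/-- The lcm of two monomials (pointwise maximum of exponents). -/
def lcmMon {n : ℕ} (s t : Mon n) : Mon n := t + (s - t)

/-- The term `u₁ = lcm(LT g₁, LT g₂)/(LC g₁ · LT g₁)` (when the first argument is `g₁`). -/
noncomputable def uterm (μ : AdmissibleOrder n) (g₁ g₂ : MvPolynomial (Fin n) k) :
    MvPolynomial (Fin n) k :=
  monomial (lcmMon (pLT μ g₁) (pLT μ g₂) - pLT μ g₁) (pLC μ g₁)⁻¹

/-- The S-polynomial of `g₁` and `g₂`. -/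
noncomputable def Spol (μ : AdmissibleOrder n) (g₁ g₂ : MvPolynomial (Fin n) k) :
    MvPolynomial (Fin n) k :=
  uterm μ g₁ g₂ * g₁ - uterm μ g₂ g₁ * g₂

/-- `(g₁, g₂)` is a normal pair. -/
noncomputable def NormalPair [NeZero m] (μ : AdmissibleOrder n) (μ' : ModuleOrder n m)
    (F : Fin m → MvPolynomial (Fin n) k) (g₁ g₂ : MvPolynomial (Fin n) k) : Prop :=
  PrimSIrr μ μ' F g₁ ∧ PrimSIrr μ μ' F g₂ ∧
  sig μ' F (uterm μ g₁ g₂ * g₁) =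
    mact (lcmMon (pLT μ g₁) (pLT μ g₂) - pLT μ g₁) (sig μ' F g₁) ∧
  sig μ' F (uterm μ g₂ g₁ * g₂) =
    mact (lcmMon (pLT μ g₂) (pLT μ g₁) - pLT μ g₂) (sig μ' F g₂) ∧
  sig μ' F (uterm μ g₁ g₂ * g₁) ≠ sig μ' F (uterm μ g₂ g₁ * g₂)


end
end F5

open F5 MvPolynomial

section Aux

variable {k : Type*} [Field k] {n m : ℕ}

lemma mem_msupport (u : Fin m → MvPolynomial (Fin n) k) (σ : MTerm n m) :
    σ ∈ msupport u ↔ (u σ.2).coeff σ.1 ≠ 0 := by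
  classical
  obtain ⟨t, l⟩ := σ
  simp only [msupport, Finset.mem_biUnion, Finset.mem_univ, true_and, Finset.mem_image]
  constructor
  · rintro ⟨l', t', ht', h⟩
    obtain ⟨rfl, rfl⟩ := Prod.mk.injEq .. ▸ h
    simpa [MvPolynomial.mem_support_iff] using ht'
  · intro h
    exact ⟨l, t, by simpa [MvPolynomial.mem_support_iff] using h, rfl⟩

lemma msupport_nonempty (u : Fin m → MvPolynomial (Fin n) k) (hu : u ≠ 0) :
    (msupport u).Nonempty := by
  by_contra h
  apply hu
  funext i
  apply MvPolynomial.ext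
  intro t
  by_contra ht
  exact h ⟨(t, i), (mem_msupport u (t, i)).mpr (by simpa using ht)⟩

lemma mLT_mem [NeZero m] (μ' : ModuleOrder n m) (u : Fin m → MvPolynomial (Fin n) k)
    (hu : u ≠ 0) : mLT μ' u ∈ msupport u := by
  rw [mLT, dif_pos (msupport_nonempty u hu)]
  exact @Finset.max'_mem _ μ'.ord _ _

lemma le_mLT [NeZero m] (μ' : ModuleOrder n m) (u : Fin m → MvPolynomial (Fin n) k)
    (hu : u ≠ 0) (τ : MTerm n m) (hτ : τ ∈ msupport u) : μ'.ord.le τ (mLT μ' u) := by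
  rw [mLT, dif_pos (msupport_nonempty u hu)]
  exact @Finset.le_max' _ μ'.ord _ _ hτ

end Aux

/-- for every nonzero `f ∈ I`, `S(f) ∈ NS(Syz F)`. -/
theorem stmt_4 {k : Type*} [Field k] {n m : ℕ} [NeZero m]
    (μ' : ModuleOrder n m) (F : Fin m → MvPolynomial (Fin n) k)
    (f : MvPolynomial (Fin n) k) (hfI : f ∈ idealI F) (hf : f ≠ 0) :
    sig μ' F f ∉ LTSyz μ' F := by
  classical
  -- the set defining the signature is nonempty
  obtain ⟨c, hc⟩ := (Submodule.mem_span_range_iff_exists_fun _).mp hfI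
  have hc' : vmap F c = f := by simpa [vmap, smul_eq_mul] using hc
  have hc0 : c ≠ 0 := by
    rintro rfl
    apply hf
    rw [← hc']
    simp [vmap]
  have hne : {σ : MTerm n m |
      ∃ u : Fin m → MvPolynomial (Fin n) k, u ≠ 0 ∧ vmap F u = f ∧ mLT μ' u = σ}.Nonempty :=
    ⟨mLT μ' c, c, hc0, hc', rfl⟩
  have hsig : sig μ' F f = μ'.wf.min _ hne := by rw [sig, dif_pos hne]
  -- a witness realizing the signature
  obtain ⟨u, hu0, hvu, huLT⟩ := hsig ▸ μ'.wf.min_mem _ hne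
  set σ : MTerm n m := sig μ' F f with hσ
  rintro ⟨s, hs0, hvs, hsLT⟩
  -- cancel the leading term
  set γ : k := (u σ.2).coeff σ.1 / (s σ.2).coeff σ.1 with hγ
  set u' : Fin m → MvPolynomial (Fin n) k := fun i => u i - C γ * s i with hu'
  have hvu' : vmap F u' = f := by
    simp only [vmap, hu', sub_mul, Finset.sum_sub_distrib, mul_assoc, ← Finset.mul_sum]
    rw [show ∑ i, s i * F i = 0 from hvs]
    simpa [vmap] using hvu
  have hu'0 : u' ≠ 0 := by
    intro h0
    apply hf
    rw [← hvu', h0]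
    simp [vmap]
  have hscoeff : (s σ.2).coeff σ.1 ≠ 0 :=
    (mem_msupport s σ).mp (hsLT ▸ mLT_mem μ' s hs0)
  have hσnot : σ ∉ msupport u' := by
    rw [mem_msupport]
    simp only [hu', MvPolynomial.coeff_sub, MvPolynomial.coeff_C_mul]
    rw [hγ, div_mul_cancel₀ _ hscoeff]
    simp
  have hlt : μ'.ord.lt (mLT μ' u') σ := by
    have hmem := mLT_mem μ' u' hu'0
    have hsub : mLT μ' u' ∈ msupport u ∨ mLT μ' u' ∈ msupport s := by
      by_contra h
      push_neg at h
      rw [mem_msupport] at hmem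
      apply hmem
      have h1 := (mem_msupport u (mLT μ' u')).not_left.mp h.1
      have h2 := (mem_msupport s (mLT μ' u')).not_left.mp h.2
      simp only [hu', MvPolynomial.coeff_sub, MvPolynomial.coeff_C_mul, h1, h2, mul_zero,
        sub_zero]
      rw [← hu', h1, h2]
      simp
    have hle : μ'.ord.le (mLT μ' u') σ := by
      rcases hsub with h | h
      · exact huLT ▸ le_mLT μ' u hu0 _ h
      · exact hsLT ▸ le_mLT μ' s hs0 _ h
    have hneq : mLT μ' u' ≠ σ := fun h => hσnot (h ▸ hmem)
    exact @lt_of_le_of_ne _ μ'.ord.toPartialOrder _ _ hle hneq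
  exact μ'.wf.not_lt_min {σ : MTerm n m |
      ∃ u : Fin m → MvPolynomial (Fin n) k, u ≠ 0 ∧ vmap F u = f ∧ mLT μ' u = σ}
    (x := mLT μ' u') ⟨u', hu'0, hvu', rfl⟩ (hsig ▸ hlt)
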